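/- Let W = (𝒫, n) be a well-defined Wilson loop diagram with V_𝒫 = Fin n, let P ⊆ 𝒫, and let M be the matroid M(W). Let M' be the matroid on ground set V_{𝒫∖P} = Fin n ∖ F(P) whose independent sets are exactly the sets S ⊆ V_{𝒫∖P} such that |U| ≤ |{q ∈ 𝒫∖P : V_q ∩ U ≠ ∅}| for every U ⊆ S (the matroid M(W/P) of the contracted diagram W/P = (𝒫∖P, V_{𝒫∖P})). Then the contraction M / F(P) equals M' if and only if the rank of F(P) in M equals |P|. -/

import Mathlib

open Matroid Set

/-- The support of a propagator: its two endpoints and their cyclic successors. -/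
def Vp (n : ℕ) [NeZero n] (p : Fin n × Fin n) : Set (Fin n) :=
  {p.1, p.1 + 1, p.2, p.2 + 1}

/-- The support of a set of propagators. -/
def VP (n : ℕ) [NeZero n] (P : Set (Fin n × Fin n)) : Set (Fin n) :=
  ⋃ p ∈ P, Vp n p

/-- `propsOf n Ps S` is `Prop(S)`: the propagators of `Ps` whose support meets `S`. -/
def propsOf (n : ℕ) [NeZero n] (Ps : Set (Fin n × Fin n)) (S : Set (Fin n)) :
    Set (Fin n × Fin n) :=
  {p ∈ Ps | (Vp n p ∩ S).Nonempty}

/-- A Wilson loop diagram `(Ps, n)` is well defined if `|V_P| ≥ |P| + 3`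
for every nonempty `P ⊆ Ps`. -/
def WellDefinedWLD (n : ℕ) [NeZero n] (Ps : Set (Fin n × Fin n)) : Prop :=
  ∀ P ⊆ Ps, P.Nonempty → P.ncard + 3 ≤ (VP n P).ncard
/-- A circuit of a matroid: a minimal dependent set. -/
def Matroid.IsCircuitOf {α : Type*} (M : Matroid α) (C : Set α) : Prop :=
  M.Dep C ∧ ∀ D ⊂ C, ¬ M.Dep D

/-- A union of circuits (a cyclic set) of a matroid. -/
def Matroid.UnionOfCircuits {α : Type*} (M : Matroid α) (C : Set α) : Prop :=
  ∃ 𝒞 : Set (Set α), (∀ D ∈ 𝒞, M.IsCircuitOf D) ∧ C = ⋃₀ 𝒞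

/-- A matroid is connected if its ground set is nonempty and any two elements of the
ground set are equal or lie on a common circuit. -/
def Matroid.Conn {α : Type*} (M : Matroid α) : Prop :=
  M.E.Nonempty ∧ ∀ x ∈ M.E, ∀ y ∈ M.E, x = y ∨ ∃ C, M.IsCircuitOf C ∧ x ∈ C ∧ y ∈ C

/-- The rank of a set in a matroid: the maximal size of an independent subset. -/
noncomputable def Matroid.rk' {α : Type*} (M : Matroid α) (X : Set α) : ℕ :=
  sSup (Set.ncard '' {I | M.Indep I ∧ I ⊆ X})

/-- Contraction of a matroid by a set, defined via duality. -/
def Matroid.contractBy {α : Type*} (M : Matroid α) (C : Set α) : Matroid α :=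
  (M✶ ↾ (M.E \ C))✶


lemma contractBy_ground {α : Type*} (M : Matroid α) (C : Set α) :
    (M.contractBy C).E = M.E \ C := rfl

lemma contractBy_indep_iff {α : Type*} {M : Matroid α} {C : Set α} (hC : C ⊆ M.E) {I : Set α} :
    (M.contractBy C).Indep I ↔ I ⊆ M.E \ C ∧ ∃ B, M.IsBasis B C ∧ M.Indep (I ∪ B) := by
  have hCE : M.E \ C ⊆ M✶.E := by rw [dual_ground]; exact diff_subset
  rw [Matroid.contractBy, dual_indep_iff_exists']
  simp only [restrict_ground_eq]
  constructor
  · rintro ⟨hIE, D, hD, hdis⟩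
    rw [isBase_restrict_iff hCE] at hD
    obtain ⟨D', hD', hDeq⟩ := hD.exists_isBase
    have hD'E : D' ⊆ M.E := hD'.subset_ground
    have hBhat : M.IsBase (M.E \ D') := hD'.compl_isBase_of_dual
    have hbasis : M.IsBasis ((M.E \ D') ∩ C) C := by
      rw [hBhat.inter_isBasis_iff_compl_inter_isBasis_dual hC, diff_diff_cancel_left hD'E, ← hDeq]
      exact hD
    refine ⟨hIE, _, hbasis, ?_⟩
    have hIB : I ⊆ M.E \ D' := by
      intro x hx
      have hxE := hIE hx
      refine ⟨hxE.1, fun hxD' => ?_⟩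
      exact (Set.disjoint_left.mp hdis hx) (hDeq ▸ (⟨hxD', hxE⟩ : x ∈ D' ∩ (M.E \ C)))
    exact hBhat.indep.subset (union_subset hIB inter_subset_left)
  · rintro ⟨hIE, B, hB, hIB⟩
    obtain ⟨B', hB', hsub⟩ := hIB.exists_isBase_superset
    have hBC : B = B' ∩ C := hB.eq_of_subset_indep (hB'.indep.inter_right C)
      (subset_inter (subset_union_right.trans hsub) hB.subset) inter_subset_right
    have hdualbasis : M✶.IsBasis ((M.E \ B') ∩ (M.E \ C)) (M.E \ C) := by
      rw [← hB'.inter_isBasis_iff_compl_inter_isBasis_dual hC, ← hBC]; exact hB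
    have hIB' : I ⊆ B' := subset_union_left.trans hsub
    refine ⟨hIE, (M.E \ B') ∩ (M.E \ C), ?_, ?_⟩
    · rw [isBase_restrict_iff hCE]; exact hdualbasis
    · exact Set.disjoint_left.mpr fun x hxI hxD => hxD.1.2 (hIB' hxI)

lemma rk'_eq_of_basis {α : Type*} {M : Matroid α} {B C : Set α} (hC : C.Finite)
    (hB : M.IsBasis B C) : M.rk' C = B.ncard := by
  have hne : (Set.ncard '' {I | M.Indep I ∧ I ⊆ C}).Nonempty :=
    ⟨(∅ : Set α).ncard, ⟨∅, ⟨M.empty_indep, empty_subset _⟩, rfl⟩⟩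
  apply le_antisymm
  · refine csSup_le hne ?_
    rintro x ⟨I, ⟨hI, hIC⟩, rfl⟩
    obtain ⟨B', hB', hIB'⟩ := hI.subset_isBasis_of_subset hIC hB.subset_ground
    have hcard : B'.ncard = B.ncard := by
      rw [ncard_def, hB'.encard_eq_encard hB, ← ncard_def]
    exact le_trans (ncard_le_ncard hIB' (hC.subset hB'.subset)) hcard.le
  · refine le_csSup ⟨C.ncard, ?_⟩ ⟨B, ⟨hB.indep, hB.subset⟩, rfl⟩
    rintro x ⟨I, ⟨hI, hIC⟩, rfl⟩
    exact ncard_le_ncard hIC hC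

lemma exists_big_indep (n : ℕ) [NeZero n] (Ps : Set (Fin n × Fin n)) (hW : WellDefinedWLD n Ps)
    (M : Matroid (Fin n))
    (hMI : ∀ S : Set (Fin n), M.Indep S ↔ ∀ U ⊆ S, U.ncard ≤ (propsOf n Ps U).ncard) :
    ∃ S : Set (Fin n), M.Indep S ∧ S.ncard = Ps.ncard := by
  classical
  have hhall : ∀ s : Finset ↥Ps, s.card ≤ (s.biUnion (fun p => (Vp n p.1).toFinset)).card := by
    intro s
    rcases s.eq_empty_or_nonempty with rfl | hs
    · simp
    · have hQ : (Subtype.val '' (↑s : Set ↥Ps)) ⊆ Ps := by rintro q ⟨p, _, rfl⟩; exact p.2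
      have hQne : (Subtype.val '' (↑s : Set ↥Ps)).Nonempty := (hs.to_set).image _
      have hW' := hW _ hQ hQne
      have h1 : (Subtype.val '' (↑s : Set ↥Ps)).ncard = s.card := by
        rw [ncard_image_of_injective _ Subtype.val_injective, ncard_coe_finset]
      have h2 : VP n (Subtype.val '' (↑s : Set ↥Ps))
          = ↑(s.biUnion fun p => (Vp n p.1).toFinset) := by
        ext x
        simp [VP, Finset.mem_biUnion]
      rw [h1, h2, ncard_coe_finset] at hW'
      omega
  obtain ⟨f, hfinj, hf⟩ := (Finset.all_card_le_biUnion_card_iff_exists_injective _).mp hhall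
  refine ⟨Set.range f, ?_, ?_⟩
  · rw [hMI]
    intro U hU
    have hUT : f '' (f ⁻¹' U) = U := by
      rw [Set.image_preimage_eq_inter_range]; exact inter_eq_left.mpr hU
    have hsub : Subtype.val '' (f ⁻¹' U) ⊆ propsOf n Ps U := by
      rintro q ⟨p, hp, rfl⟩
      exact ⟨p.2, ⟨f p, by simpa using hf p, hp⟩⟩
    calc U.ncard = (f '' (f ⁻¹' U)).ncard := by rw [hUT]
      _ = (f ⁻¹' U).ncard := ncard_image_of_injective _ hfinj
      _ = (Subtype.val '' (f ⁻¹' U)).ncard :=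
          (ncard_image_of_injective _ Subtype.val_injective).symm
      _ ≤ _ := ncard_le_ncard hsub (Set.toFinite _)
  · rw [← image_univ, ncard_image_of_injective _ hfinj, ncard_univ, Nat.card_coe_set_eq]

/-- The propagator flat `F(P)`: vertices supporting only propagators in `P`. -/
def FP (n : ℕ) [NeZero n] (Ps P : Set (Fin n × Fin n)) : Set (Fin n) :=
  VP n P \ VP n (Ps \ P)

/-- Let `W = (Ps, n)` be a well-defined Wilson loop diagram with
`V_Ps = Fin n`, `P ⊆ Ps`, `M = M(W)`, and let `M'` be the matroid of the contracted
diagram `W/P = (Ps \ P, V_{Ps \ P})`. Then `M / F(P) = M'` iff `rk F(P) = |P|`. -/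
theorem contraction_eq_contracted_diagram_iff_rank (n : ℕ) [NeZero n]
    (Ps : Set (Fin n × Fin n)) (hW : WellDefinedWLD n Ps) (hcover : VP n Ps = Set.univ)
    (P : Set (Fin n × Fin n)) (hP : P ⊆ Ps)
    (M : Matroid (Fin n)) (hME : M.E = Set.univ)
    (hMI : ∀ S : Set (Fin n), M.Indep S ↔ ∀ U ⊆ S, U.ncard ≤ (propsOf n Ps U).ncard)
    (M' : Matroid (Fin n)) (hM'E : M'.E = VP n (Ps \ P))
    (hM'I : ∀ S : Set (Fin n), M'.Indep S ↔ S ⊆ VP n (Ps \ P) ∧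
      ∀ U ⊆ S, U.ncard ≤ (propsOf n (Ps \ P) U).ncard) :
    M.contractBy (FP n Ps P) = M' ↔ M.rk' (FP n Ps P) = P.ncard := by
  classical
  set C := FP n Ps P with hCdef
  have hCE : C ⊆ M.E := by rw [hME]; exact subset_univ _
  have hVPunion : VP n Ps = VP n P ∪ VP n (Ps \ P) := by
    ext x
    simp only [VP, mem_iUnion, mem_union, exists_prop]
    constructor
    · rintro ⟨p, hp, hx⟩
      by_cases h : p ∈ P
      exacts [Or.inl ⟨p, h, hx⟩, Or.inr ⟨p, ⟨hp, h⟩, hx⟩]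
    · rintro (⟨p, hp, hx⟩ | ⟨p, hp, hx⟩)
      exacts [⟨p, hP hp, hx⟩, ⟨p, hp.1, hx⟩]
  have hcomplC : Set.univ \ C = VP n (Ps \ P) := by
    ext x
    simp only [mem_diff, mem_univ, true_and]
    constructor
    · intro hx
      have hxPs : x ∈ VP n Ps := by rw [hcover]; exact mem_univ x
      rw [hVPunion] at hxPs
      rcases hxPs with h | h
      · by_contra h2
        exact hx ⟨h, h2⟩
      · exact h
    · intro hx hxC
      exact hxC.2 hx
  have propsOf_C_sub_P : ∀ {S : Set (Fin n)}, S ⊆ C → propsOf n Ps S ⊆ P := by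
    intro S hS p hp
    by_contra h
    obtain ⟨x, hxV, hxS⟩ := hp.2
    exact (hS hxS).2 (show x ∈ VP n (Ps \ P) from Set.mem_biUnion (⟨hp.1, h⟩ : p ∈ Ps \ P) hxV)
  constructor
  · intro h
    obtain ⟨B, hB⟩ := M.exists_isBasis C hCE
    rw [rk'_eq_of_basis (toFinite C) hB]
    have hble : B.ncard ≤ P.ncard := by
      have h1 := (hMI B).mp hB.indep B subset_rfl
      have h2 : propsOf n Ps B ⊆ P := propsOf_C_sub_P hB.subset
      exact h1.trans (ncard_le_ncard h2 (toFinite _))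
    obtain ⟨S, hS, hScard⟩ := exists_big_indep n Ps hW M hMI
    obtain ⟨B₂, hB₂, hSB₂⟩ := hS.exists_isBase_superset
    obtain ⟨Bh, hBh, hBBh⟩ := hB.indep.exists_isBase_superset
    have hcards : Bh.ncard = B₂.ncard := hBh.ncard_eq_ncard_of_isBase hB₂
    have hB₂big : Ps.ncard ≤ B₂.ncard := hScard ▸ ncard_le_ncard hSB₂ (toFinite _)
    have hBhC : Bh ∩ C = B := (hB.eq_of_subset_indep (hBh.indep.inter_right C)
      (subset_inter hBBh hB.subset) inter_subset_right).symm
    have hWsub : Bh \ B ⊆ M.E \ C := by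
      intro x hx
      refine ⟨hBh.subset_ground hx.1, fun hxC => hx.2 ?_⟩
      rw [← hBhC]; exact ⟨hx.1, hxC⟩
    have hWindep : (M.contractBy C).Indep (Bh \ B) := by
      rw [contractBy_indep_iff hCE]
      exact ⟨hWsub, B, hB, by rw [diff_union_of_subset hBBh]; exact hBh.indep⟩
    rw [h, hM'I] at hWindep
    have h3 : (Bh \ B).ncard ≤ (Ps \ P).ncard := by
      refine (hWindep.2 _ subset_rfl).trans (ncard_le_ncard ?_ (toFinite _))
      exact fun q hq => hq.1
    have hd1 : (Bh \ B).ncard = Bh.ncard - B.ncard := ncard_diff hBBh (toFinite _)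
    have hd2 : (Ps \ P).ncard = Ps.ncard - P.ncard := ncard_diff hP (toFinite _)
    have hPle : P.ncard ≤ Ps.ncard := ncard_le_ncard hP (toFinite _)
    have hBBh' : B.ncard ≤ Bh.ncard := ncard_le_ncard hBBh (toFinite _)
    omega
  · intro hr
    refine ext_indep ?_ ?_
    · rw [contractBy_ground, hME, hcomplC, hM'E]
    intro I _
    rw [contractBy_indep_iff hCE, hM'I]
    constructor
    · rintro ⟨hIE, B', hB', hIB'⟩
      have hB'card : B'.ncard = P.ncard := by
        rw [← rk'_eq_of_basis (toFinite C) hB', hr]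
      have hIsub : I ⊆ VP n (Ps \ P) := by
        rw [← hcomplC]
        intro x hx
        exact ⟨mem_univ x, (hIE hx).2⟩
      refine ⟨hIsub, fun U hU => ?_⟩
      have hdisjUB : Disjoint U B' := Set.disjoint_left.mpr fun x hxU hxB =>
        ((hIE (hU hxU)).2) (hB'.subset hxB)
      have h1 := (hMI _).mp hIB' (U ∪ B') (union_subset_union hU subset_rfl)
      have hcard : (U ∪ B').ncard = U.ncard + B'.ncard :=
        ncard_union_eq hdisjUB (toFinite _) (toFinite _)
      have hsub : propsOf n Ps (U ∪ B') ⊆ propsOf n (Ps \ P) U ∪ P := by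
        rintro p ⟨hpPs, x, hxV, hxU⟩
        by_cases hpP : p ∈ P
        · exact Or.inr hpP
        · rcases hxU with hxU | hxB
          · exact Or.inl ⟨⟨hpPs, hpP⟩, x, hxV, hxU⟩
          · exact absurd
              (show x ∈ VP n (Ps \ P) from Set.mem_biUnion (⟨hpPs, hpP⟩ : p ∈ Ps \ P) hxV)
              (hB'.subset hxB).2
      have h2 : (propsOf n Ps (U ∪ B')).ncard
          ≤ (propsOf n (Ps \ P) U).ncard + P.ncard :=
        le_trans (ncard_le_ncard hsub (toFinite _)) (ncard_union_le _ _)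
      omega
    · rintro ⟨hIsub, hcount⟩
      obtain ⟨B, hB⟩ := M.exists_isBasis C hCE
      have hIE : I ⊆ M.E \ C := by
        rw [hME, hcomplC]; exact hIsub
      refine ⟨hIE, B, hB, ?_⟩
      rw [hMI]
      intro U hU
      have hU1 : U \ C ⊆ I := by
        intro x hx
        rcases hU hx.1 with h | h
        · exact h
        · exact absurd (hB.subset h) hx.2
      have hU2 : U ∩ C ⊆ B := by
        intro x hx
        rcases hU hx.1 with h | h
        · exact absurd hx.2 (hIE h).2
        · exact h
      have h1 : (U \ C).ncard ≤ (propsOf n (Ps \ P) (U \ C)).ncard := hcount _ hU1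
      have h2 : (U ∩ C).ncard ≤ (propsOf n Ps (U ∩ C)).ncard :=
        (hMI B).mp hB.indep _ hU2
      have hP2 : propsOf n Ps (U ∩ C) ⊆ P := propsOf_C_sub_P inter_subset_right
      have hsub : propsOf n (Ps \ P) (U \ C) ∪ propsOf n Ps (U ∩ C) ⊆ propsOf n Ps U := by
        rintro p (⟨hp1, x, hxV, hxU⟩ | ⟨hp1, x, hxV, hxU⟩)
        · exact ⟨hp1.1, x, hxV, hxU.1⟩
        · exact ⟨hp1, x, hxV, hxU.1⟩
      have hdisj : Disjoint (propsOf n (Ps \ P) (U \ C)) (propsOf n Ps (U ∩ C)) :=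
        Set.disjoint_left.mpr fun p hp1 hp2 => hp1.1.2 (hP2 hp2)
      have hUeq : (U \ C).ncard + (U ∩ C).ncard = U.ncard := by
        rw [← ncard_union_eq (Set.disjoint_left.mpr fun x hx hx2 => hx.2 hx2.2)
          (toFinite _) (toFinite _), Set.diff_union_inter]
      have hfin : (propsOf n (Ps \ P) (U \ C)).ncard + (propsOf n Ps (U ∩ C)).ncard
          ≤ (propsOf n Ps U).ncard := by
        rw [← ncard_union_eq hdisj (toFinite _) (toFinite _)]
        exact ncard_le_ncard hsub (toFinite _)
      omega
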